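/- Let σ, ω, ϑ be integers with σ, ϑ not divisible by 3, let η ≥ 1, γ = σϑ, and suppose 3 divides 2σ − ω. Define m(x,y) = (1/3)(1 + e^{2πi σ x} + e^{2πi (ω x + 3^η ϑ y)}). Then every zero (x,y) of m has the form x = ℓ1/(3γ) and y = ℓ2/(3^η γ) for some integers ℓ1, ℓ2 with 3 ∤ ℓ1. -/

import Mathlib

open Complex Real

lemma stmt5_aux_mul (s t : ℝ) :
    Complex.exp (2 * (π:ℂ) * Complex.I * s) * Complex.exp (2 * (π:ℂ) * Complex.I * t)
      = Complex.exp (2 * (π:ℂ) * Complex.I * ((s + t : ℝ) : ℂ)) := by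
  rw [← Complex.exp_add]
  congr 1
  push_cast
  ring

lemma stmt5_aux_conj (t : ℝ) :
    (starRingEnd ℂ) (Complex.exp (2 * (π:ℂ) * Complex.I * t))
      = Complex.exp (2 * (π:ℂ) * Complex.I * ((-t : ℝ) : ℂ)) := by
  rw [← Complex.exp_conj]
  congr 1
  simp only [map_mul, Complex.conj_I, Complex.conj_ofReal, map_ofNat]
  push_cast
  ring

lemma stmt5_aux_int (t : ℝ) (h : Complex.exp (2 * (π:ℂ) * Complex.I * t) = 1) :
    ∃ n : ℤ, t = n := by
  rw [Complex.exp_eq_one_iff] at h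
  obtain ⟨n, hn⟩ := h
  refine ⟨n, ?_⟩
  have h2 : ((t:ℂ) - n) * (2 * (π:ℂ) * Complex.I) = 0 := by linear_combination hn
  have hne : (2 * (π:ℂ) * Complex.I) ≠ 0 := by
    simp [Complex.I_ne_zero, Real.pi_ne_zero, Complex.ofReal_ne_zero]
  have h3 := (mul_eq_zero.mp h2).resolve_right hne
  have h4 : (t:ℂ) = n := sub_eq_zero.mp h3
  exact_mod_cast h4

lemma stmt5_aux_one (n : ℤ) : Complex.exp (2 * (π:ℂ) * Complex.I * ((n:ℝ):ℂ)) = 1 := by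
  rw [show (2 * (π:ℂ) * Complex.I * ((n:ℝ):ℂ)) = n * (2*(π:ℂ)*Complex.I) by push_cast; ring]
  exact Complex.exp_int_mul_two_pi_mul_I n

theorem stmt_5 (σ ω ϑ γ : ℤ) (η : ℕ) (hη : 1 ≤ η)
    (hσ3 : ¬ (3 : ℤ) ∣ σ) (hϑ3 : ¬ (3 : ℤ) ∣ ϑ)
    (hγ : γ = σ * ϑ)
    (hdiv : (3 : ℤ) ∣ 2 * σ - ω)
    (m : ℝ → ℝ → ℂ)
    (hm : ∀ x y : ℝ, m x y = (1/3) * (1 + Complex.exp (2 * Real.pi * Complex.I * (σ * x))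
      + Complex.exp (2 * Real.pi * Complex.I * (ω * x + 3 ^ η * ϑ * y))))
    (x y : ℝ) (hxy : m x y = 0) :
    ∃ ℓ1 ℓ2 : ℤ, ¬ (3 : ℤ) ∣ ℓ1 ∧ x = (ℓ1 : ℝ) / (3 * γ) ∧ y = (ℓ2 : ℝ) / (3 ^ η * γ) := by
  have hσ0 : σ ≠ 0 := by rintro rfl; exact hσ3 (dvd_zero 3)
  have hϑ0 : ϑ ≠ 0 := by rintro rfl; exact hϑ3 (dvd_zero 3)
  set A : ℝ := (σ:ℝ) * x with hAdef
  set B : ℝ := (ω:ℝ) * x + 3 ^ η * (ϑ:ℝ) * y with hBdef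
  set p : ℂ := Complex.exp (2 * (π:ℂ) * Complex.I * (A:ℂ)) with hpdef
  set q : ℂ := Complex.exp (2 * (π:ℂ) * Complex.I * (B:ℂ)) with hqdef
  set p' : ℂ := Complex.exp (2 * (π:ℂ) * Complex.I * ((-A:ℝ):ℂ)) with hp'def
  set q' : ℂ := Complex.exp (2 * (π:ℂ) * Complex.I * ((-B:ℝ):ℂ)) with hq'def
  -- the basic equation
  have e1 : 1 + p + q = 0 := by
    have h := hxy
    rw [hm x y] at h
    have eA : (2 * (π:ℂ) * Complex.I * ((σ:ℂ) * (x:ℂ))) = 2 * (π:ℂ) * Complex.I * (A:ℂ) := by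
      rw [hAdef]; push_cast; ring
    have eB : (2 * (π:ℂ) * Complex.I * ((ω:ℂ) * (x:ℂ) + 3 ^ η * (ϑ:ℂ) * (y:ℂ)))
        = 2 * (π:ℂ) * Complex.I * (B:ℂ) := by
      rw [hBdef]; push_cast; ring
    rw [eA, eB] at h
    rw [hpdef, hqdef]
    linear_combination 3 * h
  have h1 : p * p' = 1 := by
    rw [hpdef, hp'def, stmt5_aux_mul]
    simp
  have h2 : q * q' = 1 := by
    rw [hqdef, hq'def, stmt5_aux_mul]
    simp
  have e2 : 1 + p' + q' = 0 := by
    have h := congrArg (starRingEnd ℂ) e1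
    simp only [map_add, map_one, map_zero, hpdef, hqdef, stmt5_aux_conj] at h
    rw [hp'def, hq'def]
    exact h
  -- algebra on the unit circle
  have hq1 : q = -1 - p := by linear_combination e1
  have hq'1 : q' = -1 - p' := by linear_combination e2
  have hpp' : p + p' = -1 := by
    rw [hq1, hq'1] at h2
    linear_combination h2 - h1
  have hqp' : q = p' := by rw [hq1]; linear_combination -hpp'
  have hpq : p * q = 1 := by rw [hqp']; exact h1
  have hquad : p^2 + p + 1 = 0 := by rw [hq1] at hpq; linear_combination -hpq
  have hpne : p ≠ 1 := by
    intro h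
    rw [h] at hquad
    norm_num at hquad
  -- p^3 = 1 gives 3A ∈ ℤ
  have hcube : p * (p * p) = 1 := by linear_combination (p - 1) * hquad
  rw [hpdef, stmt5_aux_mul, stmt5_aux_mul] at hcube
  obtain ⟨n, hn⟩ := stmt5_aux_int _ hcube
  -- q = p^2 gives B - 2A ∈ ℤ
  have hqp2 : q = p^2 := by linear_combination e1 - hquad
  have hBA : q * (p' * p') = 1 := by
    linear_combination p' * p' * hqp2 + (p * p' + 1) * h1
  rw [hqdef, hp'def, stmt5_aux_mul, stmt5_aux_mul] at hBA
  obtain ⟨k, hk⟩ := stmt5_aux_int _ hBA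
  -- 3 ∤ n
  have hn3 : ¬ (3:ℤ) ∣ n := by
    rintro ⟨j, rfl⟩
    apply hpne
    have hAj : A = (j:ℝ) := by push_cast at hn; linarith
    rw [hpdef, hAj]
    exact stmt5_aux_one j
  obtain ⟨d, hd⟩ := hdiv
  -- finish with real arithmetic
  have hσR : (σ:ℝ) ≠ 0 := Int.cast_ne_zero.mpr hσ0
  have hϑR : (ϑ:ℝ) ≠ 0 := Int.cast_ne_zero.mpr hϑ0
  have hdR : (2:ℝ) * σ - ω = 3 * d := by exact_mod_cast congrArg (Int.cast : ℤ → ℝ) hd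
  have hAn : (σ:ℝ)*x + ((σ:ℝ)*x + (σ:ℝ)*x) = n := by rw [← hAdef]; exact hn
  have hBk : ((ω:ℝ) * x + 3 ^ η * (ϑ:ℝ) * y) + (-((σ:ℝ)*x) + -((σ:ℝ)*x)) = k := by
    rw [← hAdef, ← hBdef]; exact hk
  refine ⟨n * ϑ, n * d + k * σ, ?_, ?_, ?_⟩
  · intro h
    rcases (Int.prime_three.dvd_mul).mp h with h' | h'
    · exact hn3 h'
    · exact hϑ3 h'
  · rw [hγ]
    push_cast
    field_simp
    linear_combination hAn
  · rw [hγ]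
    push_cast
    have h3η : (3:ℝ)^η ≠ 0 := by positivity
    field_simp
    linear_combination (σ:ℝ) * hBk + (d:ℝ) * hAn + ((σ:ℝ)*x) * hdR
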